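/- The noisy Pauli observables M_x = η X, M_y = η Y, M_z = η Z (as POVMs M^η_{a|x} = η Π_{a|x} + (1−η) 1/2) with η = 1/√3 are triplewise compatible: there exists an 8-outcome qubit POVM {E_{abc}} (a,b,c ∈ {±1}) whose three dichotomic marginals equal the three noisy Pauli measurements. -/
import Mathlib

open Matrix
open scoped ComplexOrder

noncomputable section

def pauli : Fin 3 → Matrix (Fin 2) (Fin 2) ℂ :=
  ![!![0, 1; 1, 0], !![0, -Complex.I; Complex.I, 0], !![1, 0; 0, -1]]

def sgn (a : Fin 2) : ℂ := if a = 0 then 1 else -1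

def pauliProj (x : Fin 3) (a : Fin 2) : Matrix (Fin 2) (Fin 2) ℂ :=
  (1 / 2 : ℂ) • (1 + sgn a • pauli x)

def noisyPauli (η : ℝ) (x : Fin 3) (a : Fin 2) : Matrix (Fin 2) (Fin 2) ℂ :=
  (η : ℂ) • pauliProj x a + (((1 - η) / 2 : ℝ) : ℂ) • 1

/-- abbreviation for 1/√3 as a complex number -/
def sC : ℂ := ((Real.sqrt 3)⁻¹ : ℝ)

lemma sC_mul_self : sC * sC = 3⁻¹ := by
  unfold sC
  rw [← Complex.ofReal_mul, ← mul_inv, Real.mul_self_sqrt (by norm_num : (0:ℝ) ≤ 3)]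
  norm_num

/-- the Bloch matrix 1 + (a X + b Y + c Z)/√3 -/
def bloch (a b c : Fin 2) : Matrix (Fin 2) (Fin 2) ℂ :=
  !![1 + sgn c * sC, sgn a * sC - Complex.I * (sgn b * sC);
     sgn a * sC + Complex.I * (sgn b * sC), 1 - sgn c * sC]

def Epar (a b c : Fin 2) : Matrix (Fin 2) (Fin 2) ℂ := (1/8 : ℂ) • bloch a b c

def Bpar (a b c : Fin 2) : Matrix (Fin 2) (Fin 2) ℂ := (1/4 : ℂ) • bloch a b c

lemma sgn_mul_self (a : Fin 2) : sgn a * sgn a = 1 := by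
  fin_cases a <;> norm_num [sgn]

lemma star_sC : (starRingEnd ℂ) sC = sC := by
  unfold sC; exact Complex.conj_ofReal _

lemma sC_im : sC.im = 0 := by unfold sC; simp

lemma Bpar_herm (a b c : Fin 2) : (Bpar a b c)ᴴ = Bpar a b c := by
  ext i j
  fin_cases i <;> fin_cases j <;>
    simp [Bpar, bloch, conjTranspose_apply, sgn, star_sC, Complex.ext_iff] <;>
    fin_cases a <;> fin_cases b <;> fin_cases c <;> norm_num [sC_im]

lemma Epar_eq (a b c : Fin 2) : Epar a b c = (Bpar a b c)ᴴ * (Bpar a b c) := by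
  rw [Bpar_herm]
  have hI : Complex.I * Complex.I = -1 := Complex.I_mul_I
  have hs := sC_mul_self
  have ha := sgn_mul_self a
  have hb := sgn_mul_self b
  have hc := sgn_mul_self c
  ext i j
  fin_cases i <;> fin_cases j <;>
    simp [Epar, Bpar, bloch, Matrix.mul_apply, Fin.sum_univ_two] <;>
    first
    | ring1
    | linear_combination ((1/16 : ℂ) * (sC*sC)) * ha + ((1/16 : ℂ) * (sC*sC)) * hb
        + ((1/16 : ℂ) * (sC*sC)) * hc + ((3/16 : ℂ)) * hs
        + (-(1/16 : ℂ) * (sgn b * sgn b) * (sC*sC)) * hI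
    | linear_combination (-(1/16 : ℂ) * (sC*sC)) * ha + (-(1/16 : ℂ) * (sC*sC)) * hb
        + (-(1/16 : ℂ) * (sC*sC)) * hc + (-(3/16 : ℂ)) * hs
        + ((1/16 : ℂ) * (sgn b * sgn b) * (sC*sC)) * hI

set_option maxHeartbeats 1600000 in
theorem noisy_paulis_triplewise_compatible_at_inv_sqrt_three :
    ∃ E : Fin 2 → Fin 2 → Fin 2 → Matrix (Fin 2) (Fin 2) ℂ,
      (∀ a b c, (E a b c).PosSemidef) ∧
      (∑ a, ∑ b, ∑ c, E a b c) = 1 ∧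
      (∀ a, (∑ b, ∑ c, E a b c) = noisyPauli (Real.sqrt 3)⁻¹ 0 a) ∧
      (∀ b, (∑ a, ∑ c, E a b c) = noisyPauli (Real.sqrt 3)⁻¹ 1 b) ∧
      (∀ c, (∑ a, ∑ b, E a b c) = noisyPauli (Real.sqrt 3)⁻¹ 2 c) := by
  refine ⟨Epar, fun a b c => ?_, ?_, ?_, ?_, ?_⟩
  · rw [Epar_eq]; exact Matrix.posSemidef_conjTranspose_mul_self _
  · simp only [Fin.sum_univ_two]
    ext i j
    fin_cases i <;> fin_cases j <;>
      simp [Epar, bloch, sgn, Matrix.one_apply] <;> ring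
  all_goals
    intro a
    fin_cases a <;>
    · simp only [Fin.sum_univ_two]
      ext i j
      fin_cases i <;> fin_cases j <;>
        simp [Epar, bloch, sgn, noisyPauli, pauliProj, pauli, sC,
          Matrix.one_apply, Matrix.add_apply, Matrix.smul_apply] <;> ring

end
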